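/- Let $\alpha > 0$, $M \ge 2$ an integer, $R \ge 1$, and $\w_i(R,M)$ the Richardson–Romberg weights for $n_i = M^{i-1}$. Set $\pi_{\alpha,M} = \prod_{k \ge 1}(1 - M^{-\alpha k})$. Then $\sum_{i=1}^{R-1} |\w_i(R,M)| \le \frac{M^{-\alpha}}{\pi_{\alpha,M}^2}\sum_{k \ge 0} M^{-\alpha\frac{k(k+3)}{2}}$ and $1 \le \w_R(R,M) \le \frac{1}{\pi_{\alpha,M}}$, uniformly in $R$. -/

import Mathlib

open Finset

/-- Richardson–Romberg weight `w_{i+1}(R,M)` for geometric refiners `n_i = M^{i-1}`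
(Lean index `i` corresponds to paper index `i+1`). -/
noncomputable def rrWeight (α : ℝ) (M R i : ℕ) : ℝ :=
  (-1 : ℝ) ^ (R - 1 - i) *
      (M : ℝ) ^ (-(α / 2) * (((R - 1 - i) * (R - i) : ℕ) : ℝ)) /
    ((∏ j ∈ range i, (1 - (M : ℝ) ^ (-((j + 1 : ℕ) : ℝ) * α))) *
      ∏ j ∈ range (R - 1 - i), (1 - (M : ℝ) ^ (-((j + 1 : ℕ) : ℝ) * α)))

/-- The infinite product `π_{α,M} = ∏_{k ≥ 1} (1 - M^{-αk})`. -/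
noncomputable def piAlphaM (α : ℝ) (M : ℕ) : ℝ :=
  ∏' k : ℕ, (1 - (M : ℝ) ^ (-(α * ((k + 1 : ℕ) : ℝ))))

section Aux

variable {α : ℝ} {M : ℕ}

private lemma hM1 (hM : 2 ≤ M) : (1 : ℝ) < (M : ℝ) := by exact_mod_cast Nat.lt_of_lt_of_le one_lt_two hM

private lemma rpow_lt_one' (hα : 0 < α) (hM : 2 ≤ M) {x : ℝ} (hx : x < 0) :
    (M : ℝ) ^ x < 1 :=
  Real.rpow_lt_one_of_one_lt_of_neg (hM1 hM) hx

private lemma rpow_pos' (hM : 2 ≤ M) (x : ℝ) : 0 < (M : ℝ) ^ x :=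
  Real.rpow_pos_of_pos (lt_trans zero_lt_one (hM1 hM)) x

/-- `f k = 1 - M^{-α(k+1)}`, written as in `piAlphaM`. -/
private noncomputable def ff (α : ℝ) (M : ℕ) (k : ℕ) : ℝ :=
  1 - (M : ℝ) ^ (-(α * ((k + 1 : ℕ) : ℝ)))

private lemma ff_pos (hα : 0 < α) (hM : 2 ≤ M) (k : ℕ) : 0 < ff α M k := by
  have : -(α * ((k + 1 : ℕ) : ℝ)) < 0 := by
    have : (0:ℝ) < ((k + 1 : ℕ) : ℝ) := by positivity
    nlinarith
  have := rpow_lt_one' hα hM this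
  unfold ff; linarith

private lemma ff_le_one (hα : 0 < α) (hM : 2 ≤ M) (k : ℕ) : ff α M k ≤ 1 := by
  have := rpow_pos' hM (-(α * ((k + 1 : ℕ) : ℝ)))
  unfold ff; linarith

private lemma q_pow (hM : 2 ≤ M) (n : ℕ) :
    (M : ℝ) ^ (-(α * (n : ℝ))) = ((M : ℝ) ^ (-α)) ^ n := by
  rw [← Real.rpow_natCast ((M : ℝ) ^ (-α)) n, ← Real.rpow_mul (by positivity)]
  ring_nf

private lemma ff_eq (hM : 2 ≤ M) (k : ℕ) :
    ff α M k = 1 - ((M : ℝ) ^ (-α)) ^ (k + 1) := by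
  unfold ff
  rw [← q_pow hM (k+1)]

private lemma summable_log_ff (hα : 0 < α) (hM : 2 ≤ M) :
    Summable fun k => Real.log (ff α M k) := by
  set q : ℝ := (M : ℝ) ^ (-α) with hq
  have hq0 : 0 < q := rpow_pos' hM _
  have hq1 : q < 1 := rpow_lt_one' hα hM (by linarith)
  rw [← summable_neg_iff]
  apply Summable.of_nonneg_of_le
      (g := fun k => -Real.log (ff α M k)) (f := fun k => q ^ (k + 1) / (1 - q))
  · intro k
    simp only [neg_nonneg]
    exact Real.log_nonpos (ff_pos hα hM k).le (ff_le_one hα hM k)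
  · intro k
    have hfk := ff_pos hα hM k
    have hle : -Real.log (ff α M k) = Real.log (ff α M k)⁻¹ := (Real.log_inv _).symm
    rw [hle]
    have h1 := Real.log_le_sub_one_of_pos (inv_pos.mpr hfk)
    have hffe := ff_eq (α := α) hM k
    have hx1 : q ^ (k+1) ≤ q := by
      calc q ^ (k+1) ≤ q ^ 1 := pow_le_pow_of_le_one hq0.le hq1.le (by omega)
      _ = q := pow_one q
    have hfk' : ff α M k = 1 - q ^ (k+1) := hffe
    have h2 : (ff α M k)⁻¹ - 1 = q ^ (k+1) / ff α M k := by
      field_simp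
      rw [hfk']; ring
    rw [h2] at h1
    refine h1.trans ?_
    apply div_le_div_of_nonneg_left (by positivity) (by linarith) (by rw [hfk']; linarith)
  · have : Summable fun k : ℕ => q ^ k := summable_geometric_of_lt_one hq0.le hq1
    simpa [pow_succ, div_eq_mul_inv, mul_assoc] using (this.mul_right (q * (1 - q)⁻¹))

private lemma multipliable_ff (hα : 0 < α) (hM : 2 ≤ M) : Multipliable (ff α M) :=
  Real.multipliable_of_summable_log
    (fun n => ff_pos hα hM n) (summable_log_ff hα hM)

private lemma piAlphaM_eq : piAlphaM α M = ∏' k, ff α M k := rfl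


private lemma prod_ff_pos (hα : 0 < α) (hM : 2 ≤ M) (n : ℕ) :
    0 < ∏ j ∈ range n, ff α M j :=
  Finset.prod_pos fun j _ => ff_pos hα hM j

private lemma prod_ff_le_one (hα : 0 < α) (hM : 2 ≤ M) (n : ℕ) :
    ∏ j ∈ range n, ff α M j ≤ 1 :=
  Finset.prod_le_one (fun j _ => (ff_pos hα hM j).le) (fun j _ => ff_le_one hα hM j)

private lemma piAlphaM_exp (hα : 0 < α) (hM : 2 ≤ M) :
    piAlphaM α M = Real.exp (∑' k, Real.log (ff α M k)) := by
  have h := Real.rexp_tsum_eq_tprod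
    (fun n => ff_pos hα hM n) (summable_log_ff hα hM)
  rw [piAlphaM_eq]
  simpa using h.symm

private lemma piAlphaM_pos (hα : 0 < α) (hM : 2 ≤ M) : 0 < piAlphaM α M := by
  rw [piAlphaM_exp hα hM]; exact Real.exp_pos _

private lemma piAlphaM_le_prod (hα : 0 < α) (hM : 2 ≤ M) (n : ℕ) :
    piAlphaM α M ≤ ∏ j ∈ range n, ff α M j := by
  have hlog := summable_log_ff hα hM
  rw [piAlphaM_exp hα hM]
  have hP : (∏ j ∈ range n, ff α M j) = Real.exp (∑ j ∈ range n, Real.log (ff α M j)) := by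
    rw [Real.exp_sum]
    exact Finset.prod_congr rfl fun j _ => (Real.exp_log (ff_pos hα hM j)).symm
  rw [hP]
  apply Real.exp_le_exp.mpr
  have h := Summable.sum_add_tsum_nat_add n hlog
  have htail : (∑' i, Real.log (ff α M (i + n))) ≤ 0 :=
    tsum_nonpos fun i => Real.log_nonpos (ff_pos hα hM _).le (ff_le_one hα hM _)
  linarith

/-- The finite products appearing in `rrWeight` equal products of `ff`. -/
private lemma prod_eq_ff (n : ℕ) :
    (∏ j ∈ range n, (1 - (M : ℝ) ^ (-((j + 1 : ℕ) : ℝ) * α))) = ∏ j ∈ range n, ff α M j :=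
  Finset.prod_congr rfl fun j _ => by
    rw [show -((j + 1 : ℕ) : ℝ) * α = -(α * ((j + 1 : ℕ) : ℝ)) by ring]; rfl

end Aux

theorem rrWeight_bounds (α : ℝ) (hα : 0 < α) (M R : ℕ) (hM : 2 ≤ M) (hR : 1 ≤ R) :
    (∑ i ∈ range (R - 1), |rrWeight α M R i| ≤
        (M : ℝ) ^ (-α) / (piAlphaM α M) ^ 2 *
          ∑' k : ℕ, (M : ℝ) ^ (-(α * ((k * (k + 3) : ℕ) : ℝ) / 2))) ∧
      1 ≤ rrWeight α M R (R - 1) ∧ rrWeight α M R (R - 1) ≤ 1 / piAlphaM α M := by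
  have hMR : (1:ℝ) < (M:ℝ) := hM1 hM
  have hπ := piAlphaM_pos hα hM
  set t : ℕ → ℝ := fun k => (M : ℝ) ^ (-(α * ((k * (k + 3) : ℕ) : ℝ) / 2)) with ht
  set q : ℝ := (M : ℝ) ^ (-α) with hq
  have hq0 : 0 < q := rpow_pos' hM _
  have hq1 : q < 1 := rpow_lt_one' hα hM (by linarith)
  have ht_nonneg : ∀ k, 0 ≤ t k := fun k => (rpow_pos' hM _).le
  have ht_le : ∀ k, t k ≤ q ^ k := by
    intro k
    rw [ht, hq, ← q_pow hM k]
    apply Real.rpow_le_rpow_of_exponent_le hMR.le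
    have : (k : ℝ) ≤ ((k * (k + 3) : ℕ) : ℝ) / 2 := by
      have : 2 * k ≤ k * (k + 3) := by nlinarith
      push_cast
      nlinarith
    nlinarith
  have ht_summable : Summable t :=
    Summable.of_nonneg_of_le ht_nonneg ht_le (summable_geometric_of_lt_one hq0.le hq1)
  refine ⟨?_, ?_, ?_⟩
  · -- the sum bound
    have hterm : ∀ i ∈ range (R - 1),
        |rrWeight α M R i| ≤ q / (piAlphaM α M) ^ 2 * t (R - 1 - 1 - i) := by
      intro i hi
      rw [mem_range] at hi
      set k := R - 1 - 1 - i with hk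
      have hm : R - 1 - i = k + 1 := by omega
      have hm2 : R - i = k + 2 := by omega
      rw [rrWeight, hm, hm2, prod_eq_ff, prod_eq_ff]
      have hPi := piAlphaM_le_prod hα hM i
      have hPm := piAlphaM_le_prod hα hM (k + 1)
      have hPi0 := prod_ff_pos hα hM i
      have hPm0 := prod_ff_pos hα hM (k + 1)
      have hnum : ((-1 : ℝ)) ^ (k+1) * (M : ℝ) ^ (-(α / 2) * ((((k+1) * (k + 2)) : ℕ) : ℝ)) =
          ((-1 : ℝ)) ^ (k+1) * (q * t k) := by
        congr 1
        rw [ht, hq, ← Real.rpow_add (by positivity)]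
        congr 1
        push_cast
        ring
      rw [hnum, abs_div, abs_mul, abs_pow, abs_neg, abs_one, one_pow, one_mul,
        abs_of_nonneg (by positivity), abs_of_pos (by positivity)]
      calc q * t k / ((∏ j ∈ range i, ff α M j) * ∏ j ∈ range (k+1), ff α M j)
          ≤ q * t k / (piAlphaM α M) ^ 2 := by
            apply div_le_div_of_nonneg_left (by positivity) (by positivity)
            rw [sq]
            exact mul_le_mul hPi hPm hπ.le hPi0.le
        _ = q / (piAlphaM α M) ^ 2 * t k := by ring
    calc ∑ i ∈ range (R - 1), |rrWeight α M R i|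
        ≤ ∑ i ∈ range (R - 1), q / (piAlphaM α M) ^ 2 * t (R - 1 - 1 - i) :=
          Finset.sum_le_sum hterm
      _ = q / (piAlphaM α M) ^ 2 * ∑ i ∈ range (R - 1), t (R - 1 - 1 - i) := by
          rw [Finset.mul_sum]
      _ = q / (piAlphaM α M) ^ 2 * ∑ k ∈ range (R - 1), t k := by
          rw [Finset.sum_range_reflect]
      _ ≤ q / (piAlphaM α M) ^ 2 * ∑' k, t k := by
          apply mul_le_mul_of_nonneg_left _ (by positivity)
          exact Summable.sum_le_tsum _ (fun k _ => ht_nonneg k) ht_summable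
  · -- 1 ≤ w_R
    have h0 : R - 1 - (R - 1) = 0 := Nat.sub_self _
    rw [rrWeight, h0]
    simp only [pow_zero, Nat.zero_mul, Nat.cast_zero, mul_zero, Real.rpow_zero,
      prod_range_zero, mul_one, one_mul]
    rw [prod_eq_ff]
    rw [le_div_iff₀ (prod_ff_pos hα hM (R-1)), one_mul]
    exact prod_ff_le_one hα hM (R - 1)
  · have h0 : R - 1 - (R - 1) = 0 := Nat.sub_self _
    rw [rrWeight, h0]
    simp only [pow_zero, Nat.zero_mul, Nat.cast_zero, mul_zero, Real.rpow_zero,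
      prod_range_zero, mul_one, one_mul]
    rw [prod_eq_ff]
    exact one_div_le_one_div_of_le hπ (piAlphaM_le_prod hα hM (R - 1))
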